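/- Let Y be a positive random variable whose survival function is of Hall class with parameters γ > 0, α > 0, c₀ > 0, c₁ ∈ ℝ. Then E[(1 − γ^(−1) log(Y/ω))² · 1{Y > ω}] / P(Y > ω) → 1 as ω → ∞; that is, the conditional second moment of the score term 1 − γ^(−1) log(Y/ω) given Y > ω converges to 1. -/

import Mathlib

open MeasureTheory ProbabilityTheory Filter

section HallAux

lemma hall_sq_image : (fun x : ℝ => x ^ 2) '' Set.Ioi 0 = Set.Ioi (0:ℝ) := by
  ext y
  constructor
  · rintro ⟨x, hx, rfl⟩; exact pow_pos (Set.mem_Ioi.mp hx) 2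
  · intro hy
    exact ⟨Real.sqrt y, Real.sqrt_pos.2 hy, Real.sq_sqrt (le_of_lt hy)⟩

lemma hall_sq_inj : Set.InjOn (fun x : ℝ => x ^ 2) (Set.Ioi 0) := by
  intro a ha b hb hab
  have := congrArg Real.sqrt hab
  rwa [Real.sqrt_sq (le_of_lt ha), Real.sqrt_sq (le_of_lt hb)] at this

lemma hall_int_xexp : IntegrableOn (fun x : ℝ => x * Real.exp (-x)) (Set.Ioi 0) := by
  have h := integrableOn_rpow_mul_exp_neg_rpow (p := 1) (s := 1) (by norm_num) (by norm_num)
  refine h.congr_fun ?_ measurableSet_Ioi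
  intro x hx
  simp [Real.rpow_one]

lemma hall_int_xexp_val : ∫ x in Set.Ioi (0:ℝ), x * Real.exp (-x) = 1 := by
  have h := Real.Gamma_eq_integral (s := 2) (by norm_num)
  rw [Real.Gamma_two] at h
  rw [h]
  refine setIntegral_congr_fun measurableSet_Ioi fun x hx => ?_
  rw [show (2:ℝ) - 1 = 1 by norm_num, Real.rpow_one, mul_comm]

lemma hall_int_2xexp : IntegrableOn (fun x : ℝ => 2 * x * Real.exp (-(1 + x))) (Set.Ioi 0) := by
  have h : IntegrableOn (fun x : ℝ => 2 * Real.exp (-1) * (x * Real.exp (-x))) (Set.Ioi 0) :=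
    hall_int_xexp.const_mul (2 * Real.exp (-1))
  refine h.congr_fun ?_ measurableSet_Ioi
  intro x hx
  show 2 * Real.exp (-1) * (x * Real.exp (-x)) = 2 * x * Real.exp (-(1 + x))
  rw [show -(1 + x) = -1 + -x by ring, Real.exp_add]
  ring

lemma hall_exp_sqrt_integrable :
    IntegrableOn (fun t : ℝ => Real.exp (-(1 + Real.sqrt t))) (Set.Ioi 0) := by
  have hderiv : ∀ x ∈ Set.Ioi (0:ℝ),
      HasDerivWithinAt (fun x : ℝ => x ^ 2) (2 * x) (Set.Ioi 0) x := by
    intro x hx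
    simpa using ((hasDerivAt_pow 2 x).hasDerivWithinAt)
  have key := (integrableOn_image_iff_integrableOn_abs_deriv_smul measurableSet_Ioi hderiv
    hall_sq_inj (fun t : ℝ => Real.exp (-(1 + Real.sqrt t))))
  rw [hall_sq_image] at key
  rw [key]
  refine hall_int_2xexp.congr_fun ?_ measurableSet_Ioi
  intro x hx
  have hx0 : (0:ℝ) < x := hx
  show 2 * x * Real.exp (-(1 + x)) = |2 * x| • Real.exp (-(1 + Real.sqrt (x ^ 2)))
  rw [Real.sqrt_sq (le_of_lt hx0), smul_eq_mul, abs_of_pos (by linarith : (0:ℝ) < 2 * x)]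

lemma hall_exp_sqrt_val :
    ∫ t in Set.Ioi (0:ℝ), Real.exp (-(1 + Real.sqrt t)) = 2 * Real.exp (-1) := by
  have key := integral_comp_rpow_Ioi_of_pos
    (g := fun t : ℝ => Real.exp (-(1 + Real.sqrt t))) (p := 2) (by norm_num)
  rw [← key]
  have : ∀ x ∈ Set.Ioi (0:ℝ),
      (2 * x ^ ((2:ℝ) - 1)) • Real.exp (-(1 + Real.sqrt (x ^ (2:ℝ)))) =
        2 * Real.exp (-1) * (x * Real.exp (-x)) := by
    intro x hx
    have hx0 : (0:ℝ) < x := hx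
    rw [show (2:ℝ) - 1 = 1 by norm_num, Real.rpow_one,
      show x ^ (2:ℝ) = x ^ (2:ℕ) by rw [← Real.rpow_natCast]; norm_num,
      Real.sqrt_sq (le_of_lt hx0), smul_eq_mul,
      show -(1 + x) = -1 + -x by ring, Real.exp_add]
    ring
  rw [setIntegral_congr_fun measurableSet_Ioi this, integral_const_mul, hall_int_xexp_val,
    mul_one]

lemma hall_cont_g1 : Continuous (fun t : ℝ => 1 - Real.exp (-(1 - Real.sqrt t))) := by
  fun_prop

lemma hall_ftc : ∫ x in (0:ℝ)..1, (2 * x - 2 * x * Real.exp (x - 1)) = 1 - 2 * Real.exp (-1) := by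
  have key : ∀ x ∈ Set.uIcc (0:ℝ) 1, HasDerivAt (fun x : ℝ => x ^ 2 - 2 * ((x - 1) * Real.exp (x - 1)))
      (2 * x - 2 * x * Real.exp (x - 1)) x := by
    intro x _
    have h1 : HasDerivAt (fun x : ℝ => x - 1) 1 x := (hasDerivAt_id x).sub_const 1
    have h2 : HasDerivAt (fun x : ℝ => Real.exp (x - 1)) (Real.exp (x - 1)) x := by
      have h2' := (Real.hasDerivAt_exp (x - 1)).comp x h1
      rw [mul_one] at h2'
      exact h2'
    have h3 := (h1.mul h2).const_mul (2:ℝ)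
    have h4 : HasDerivAt (fun x : ℝ => x ^ 2) (2 * x) x := by simpa using hasDerivAt_pow 2 x
    have := h4.sub h3
    exact this.congr_deriv (by ring)
  rw [intervalIntegral.integral_eq_sub_of_hasDerivAt key (((by fun_prop : Continuous
    (fun x : ℝ => 2 * x - 2 * x * Real.exp (x - 1)))).intervalIntegrable 0 1)]
  norm_num

lemma hall_ioo_val :
    ∫ t in Set.Ioo (0:ℝ) 1, (1 - Real.exp (-(1 - Real.sqrt t))) = 1 - 2 * Real.exp (-1) := by
  rw [← MeasureTheory.integral_Ioc_eq_integral_Ioo,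
    ← intervalIntegral.integral_of_le (by norm_num : (0:ℝ) ≤ 1)]
  have hsub := intervalIntegral.integral_comp_smul_deriv (a := 0) (b := 1)
    (f := fun x : ℝ => x ^ 2) (f' := fun x : ℝ => 2 * x)
    (g := fun t : ℝ => 1 - Real.exp (-(1 - Real.sqrt t)))
    (fun x _ => by simpa using hasDerivAt_pow 2 x) (by fun_prop) hall_cont_g1
  simp only [one_pow, zero_pow two_ne_zero] at hsub
  rw [← hsub, ← hall_ftc]
  refine intervalIntegral.integral_congr fun x hx => ?_
  have hx0 : 0 ≤ x := by
    rcases Set.mem_uIcc.mp hx with ⟨h1, _⟩ | ⟨h1, _⟩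
    · exact h1
    · linarith
  show (2 * x) • (1 - Real.exp (-(1 - Real.sqrt (x ^ 2)))) = 2 * x - 2 * x * Real.exp (x - 1)
  rw [Real.sqrt_sq hx0, smul_eq_mul, show -(1 - x) = x - 1 by ring]
  ring

lemma hall_if_integrable :
    IntegrableOn (fun t : ℝ => if t < 1 then 1 - Real.exp (-(1 - Real.sqrt t)) else 0)
      (Set.Ioi 0) := by
  rw [← Set.Ioo_union_Ici_eq_Ioi (by norm_num : (0:ℝ) < 1)]
  refine IntegrableOn.union ?_ ?_
  · refine ((hall_cont_g1.integrableOn_Icc (a := 0) (b := 1)).mono_set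
      Set.Ioo_subset_Icc_self).congr_fun ?_ measurableSet_Ioo
    intro t ht
    simp [if_pos ht.2]
  · refine (integrableOn_zero).congr_fun ?_ measurableSet_Ici
    intro t ht
    simp [if_neg (not_lt.mpr (by exact ht : (1:ℝ) ≤ t))]

lemma hall_if_val :
    ∫ t in Set.Ioi (0:ℝ), (if t < 1 then 1 - Real.exp (-(1 - Real.sqrt t)) else 0) =
      1 - 2 * Real.exp (-1) := by
  have hdisj : Disjoint (Set.Ioo (0:ℝ) 1) (Set.Ici (1:ℝ)) := by
    refine Set.disjoint_left.mpr fun t ht ht' => ?_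
    exact absurd ht.2 (not_lt.mpr ht')
  have hsub1 : Set.Ioo (0:ℝ) 1 ⊆ Set.Ioi 0 := Set.Ioo_subset_Ioi_self
  have hsub2 : Set.Ici (1:ℝ) ⊆ Set.Ioi 0 := fun t ht => Set.mem_Ioi.mpr (lt_of_lt_of_le one_pos ht)
  rw [← Set.Ioo_union_Ici_eq_Ioi (by norm_num : (0:ℝ) < 1),
    setIntegral_union hdisj measurableSet_Ici
      (hall_if_integrable.mono_set hsub1) (hall_if_integrable.mono_set hsub2)]
  have h1 : ∫ t in Set.Ioo (0:ℝ) 1, (if t < 1 then 1 - Real.exp (-(1 - Real.sqrt t)) else 0) =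
      ∫ t in Set.Ioo (0:ℝ) 1, (1 - Real.exp (-(1 - Real.sqrt t))) := by
    refine setIntegral_congr_fun measurableSet_Ioo fun t ht => ?_
    simp [if_pos ht.2]
  have h2 : ∫ t in Set.Ici (1:ℝ), (if t < 1 then 1 - Real.exp (-(1 - Real.sqrt t)) else 0) =
      ∫ t in Set.Ici (1:ℝ), (0:ℝ) := by
    refine setIntegral_congr_fun measurableSet_Ici fun t ht => ?_
    simp [if_neg (not_lt.mpr (by exact ht : (1:ℝ) ≤ t))]
  rw [h1, h2, hall_ioo_val]
  simp

lemma hall_g_val :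
    ∫ t in Set.Ioi (0:ℝ),
      ((if t < 1 then 1 - Real.exp (-(1 - Real.sqrt t)) else 0) + Real.exp (-(1 + Real.sqrt t)))
      = 1 := by
  rw [MeasureTheory.integral_add hall_if_integrable hall_exp_sqrt_integrable, hall_if_val,
    hall_exp_sqrt_val]
  ring

lemma hall_bound_integrable :
    IntegrableOn (fun t : ℝ => if t ≤ 1 then (1:ℝ) else 4 * Real.exp (-(1 + Real.sqrt t)))
      (Set.Ioi 0) := by
  rw [← Set.Ioc_union_Ioi_eq_Ioi (by norm_num : (0:ℝ) ≤ 1)]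
  refine IntegrableOn.union ?_ ?_
  · refine (((integrableOn_const_iff).mpr (Or.inr measure_Ioc_lt_top) :
        IntegrableOn (fun _ : ℝ => (1:ℝ)) (Set.Ioc 0 1) volume)).congr_fun ?_ measurableSet_Ioc
    intro t ht
    simp [if_pos ht.2]
  · have h0 : IntegrableOn (fun t : ℝ => 4 * Real.exp (-(1 + Real.sqrt t))) (Set.Ioi 0) :=
      hall_exp_sqrt_integrable.const_mul 4
    have h : IntegrableOn (fun t : ℝ => 4 * Real.exp (-(1 + Real.sqrt t))) (Set.Ioi 1) :=
      h0.mono_set (Set.Ioi_subset_Ioi (by norm_num))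
    refine h.congr_fun ?_ measurableSet_Ioi
    intro t ht
    simp [if_neg (not_le.mpr (by exact ht : (1:ℝ) < t))]

lemma hall_cond_iff {γ t ω v : ℝ} (hγ : 0 < γ) (ht : 0 ≤ t) (hω : 0 < ω) (hv : ω < v) :
    t < (1 - γ⁻¹ * Real.log (v / ω)) ^ 2 ↔
      v < ω * Real.exp (γ * (1 - Real.sqrt t)) ∨ ω * Real.exp (γ * (1 + Real.sqrt t)) < v := by
  have hv0 : 0 < v / ω := div_pos (hω.trans hv) hω
  set u : ℝ := γ⁻¹ * Real.log (v / ω) with hu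
  have h1 : t < (1 - u) ^ 2 ↔ Real.sqrt t < |1 - u| := by
    rw [← Real.sqrt_lt_sqrt_iff ht, Real.sqrt_sq_eq_abs]
  have h2 : Real.sqrt t < |1 - u| ↔ u < 1 - Real.sqrt t ∨ 1 + Real.sqrt t < u := by
    rw [lt_abs]
    constructor
    · rintro (h | h); · left; linarith
      right; linarith
    · rintro (h | h); · left; linarith
      right; linarith
  have h3 : ∀ c : ℝ, u < c ↔ v < ω * Real.exp (γ * c) := by
    intro c
    rw [hu, inv_mul_eq_div, div_lt_iff₀ hγ, mul_comm c γ, Real.log_lt_iff_lt_exp hv0,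
      div_lt_iff₀ hω, mul_comm]
  have h4 : ∀ c : ℝ, c < u ↔ ω * Real.exp (γ * c) < v := by
    intro c
    rw [hu, inv_mul_eq_div, lt_div_iff₀ hγ, mul_comm c γ, Real.lt_log_iff_exp_lt hv0,
      lt_div_iff₀ hω, mul_comm]
  rw [h1, h2, h3, h4]
end HallAux

/-- for a Hall-class survival function, the conditional second moment of
the score term `1 − γ⁻¹ log(Y/ω)` given `Y > ω` converges to 1 as `ω → ∞`. -/
theorem hall_class_conditional_second_moment_score
    {Ω : Type*} [MeasurableSpace Ω] (μ : Measure Ω) [IsProbabilityMeasure μ]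
    (Y : Ω → ℝ) (hYm : Measurable Y) (hYpos : ∀ x, 0 < Y x)
    (γ α c₀ c₁ : ℝ) (hγ : 0 < γ) (hα : 0 < α) (hc₀ : 0 < c₀)
    (ε : ℝ → ℝ)
    (hHall : ∃ y₀ : ℝ, ∀ y ≥ y₀,
      (μ {x | Y x > y}).toReal = y ^ (-(1 / γ)) * (c₀ + c₁ * y ^ (-α) + ε y))
    (hε : Tendsto (fun y : ℝ => y ^ α * ε y) atTop (nhds 0)) :
    Tendsto (fun ω : ℝ =>
        (∫ x, Set.indicator {x | ω < Y x} (fun x => (1 - γ⁻¹ * Real.log (Y x / ω)) ^ 2) x ∂μ)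
          / (μ {x | ω < Y x}).toReal)
      atTop (nhds 1) := by
  classical
  obtain ⟨y₀, hS0⟩ := hHall
  set S : ℝ → ℝ := fun y => (μ {x | y < Y x}).toReal with hSdef
  set T : ℝ → ℝ := fun y => (μ {x | y ≤ Y x}).toReal with hTdef
  set h : ℝ → ℝ := fun y => c₀ + c₁ * y ^ (-α) + ε y with hhdef
  have hS : ∀ y ≥ y₀, S y = y ^ (-(1 / γ)) * h y := fun y hy => hS0 y hy
  -- ε tends to 0
  have hε0 : Tendsto ε atTop (nhds 0) := by
    have h1 : Tendsto (fun y : ℝ => y ^ (-α) * (y ^ α * ε y)) atTop (nhds 0) := by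
      simpa using (tendsto_rpow_neg_atTop hα).mul hε
    refine h1.congr' ?_
    filter_upwards [eventually_gt_atTop 0] with y hy
    rw [← mul_assoc, ← Real.rpow_add hy]
    simp
  have hh : Tendsto h atTop (nhds c₀) := by
    have h2 : Tendsto (fun y : ℝ => c₀ + c₁ * y ^ (-α) + ε y) atTop
        (nhds (c₀ + c₁ * 0 + 0)) :=
      ((tendsto_const_nhds.add (tendsto_const_nhds.mul (tendsto_rpow_neg_atTop hα))).add hε0)
    simpa using h2
  -- choose ω₁
  have hhev : ∀ᶠ y in atTop, c₀ / 2 ≤ h y ∧ h y ≤ 2 * c₀ := by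
    have h1 := hh.eventually (eventually_le_nhds (by linarith : c₀ < 2 * c₀))
    have h2 := hh.eventually (eventually_ge_nhds (by linarith : c₀ / 2 < c₀))
    filter_upwards [h1, h2] with y hy1 hy2 using ⟨hy2, hy1⟩
  obtain ⟨a₀, ha₀⟩ := eventually_atTop.mp hhev
  set ω₁ : ℝ := max a₀ (max y₀ 1) with hω₁def
  have hω₁y₀ : y₀ ≤ ω₁ := le_max_of_le_right (le_max_left _ _)
  have hω₁1 : (1:ℝ) ≤ ω₁ := le_max_of_le_right (le_max_right _ _)
  have hhb : ∀ y ≥ ω₁, c₀ / 2 ≤ h y ∧ h y ≤ 2 * c₀ :=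
    fun y hy => ha₀ y (le_trans (le_max_left _ _) hy)
  have hωpos : ∀ ω : ℝ, ω₁ ≤ ω → 0 < ω :=
    fun ω hω => lt_of_lt_of_le one_pos (le_trans hω₁1 hω)
  have hSposAll : ∀ y, ω₁ ≤ y → 0 < S y := by
    intro y hy
    rw [hS y (le_trans hω₁y₀ hy)]
    exact mul_pos (Real.rpow_pos_of_pos (hωpos y hy) _)
      (lt_of_lt_of_le (by linarith) (hhb y hy).1)
  -- key algebraic identity
  have key : ∀ s : ℝ, ∀ ω : ℝ, 0 < ω → y₀ ≤ ω → y₀ ≤ ω * Real.exp (γ * s) →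
      S (ω * Real.exp (γ * s)) / S ω
        = Real.exp (-s) * (h (ω * Real.exp (γ * s)) / h ω) := by
    intro s ω hω hωy hωE
    rw [hS _ hωE, hS _ hωy,
      Real.mul_rpow (le_of_lt hω) (le_of_lt (Real.exp_pos _)),
      show Real.exp (γ * s) ^ (-(1 / γ)) = Real.exp (-s) by
        rw [← Real.exp_mul]; congr 1; field_simp,
      mul_assoc, mul_div_mul_left _ _ (ne_of_gt (Real.rpow_pos_of_pos hω _)),
      mul_div_assoc]
  -- ratio limit for strict tail
  have hR : ∀ s : ℝ, Tendsto (fun ω => S (ω * Real.exp (γ * s)) / S ω) atTop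
      (nhds (Real.exp (-s))) := by
    intro s
    have hE : (0:ℝ) < Real.exp (γ * s) := Real.exp_pos _
    have hcomp : Tendsto (fun ω : ℝ => ω * Real.exp (γ * s)) atTop atTop :=
      Tendsto.atTop_mul_const hE tendsto_id
    have h1 : Tendsto (fun ω => Real.exp (-s) * (h (ω * Real.exp (γ * s)) / h ω)) atTop
        (nhds (Real.exp (-s) * (c₀ / c₀))) :=
      tendsto_const_nhds.mul ((hh.comp hcomp).div hh (ne_of_gt hc₀))
    rw [div_self (ne_of_gt hc₀), mul_one] at h1
    refine Tendsto.congr' ?_ h1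
    filter_upwards [eventually_ge_atTop ω₁, hcomp.eventually (eventually_ge_atTop y₀)]
      with ω hω hωE
    exact (key s ω (hωpos ω hω) (le_trans hω₁y₀ hω) hωE).symm
  -- monotonicity between S and T
  have hST : ∀ y, S y ≤ T y := fun y =>
    ENNReal.toReal_mono (measure_ne_top μ _)
      (measure_mono (Set.setOf_subset_setOf.mpr fun x => le_of_lt))
  have hTS : ∀ y' y : ℝ, y' < y → T y ≤ S y' := fun y' y hy =>
    ENNReal.toReal_mono (measure_ne_top μ _)
      (measure_mono (Set.setOf_subset_setOf.mpr fun x hx => lt_of_lt_of_le hy hx))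
  -- ratio limit for weak tail
  have hR' : ∀ s : ℝ, Tendsto (fun ω => T (ω * Real.exp (γ * s)) / S ω) atTop
      (nhds (Real.exp (-s))) := by
    intro s
    rw [Metric.tendsto_nhds]
    intro δ hδ
    set s' : ℝ := -Real.log (Real.exp (-s) + δ / 2) with hs'def
    have hpos : (0:ℝ) < Real.exp (-s) + δ / 2 := by positivity
    have hes' : Real.exp (-s') = Real.exp (-s) + δ / 2 := by
      rw [hs'def, neg_neg, Real.exp_log hpos]
    have hs's : s' < s := by
      by_contra hcon
      push_neg at hcon
      have h2 := Real.exp_le_exp.mpr (neg_le_neg hcon)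
      rw [hes'] at h2
      linarith
    have h1 := (hR s).eventually
      (eventually_gt_nhds (by linarith : Real.exp (-s) - δ < Real.exp (-s)))
    have h2 := (hR s').eventually
      (eventually_lt_nhds (by rw [hes']; linarith : Real.exp (-s') < Real.exp (-s) + δ))
    filter_upwards [h1, h2, eventually_ge_atTop ω₁] with ω hω1 hω2 hωω₁
    have hω0 : 0 < ω := hωpos ω hωω₁
    have hSω : 0 < S ω := hSposAll ω hωω₁
    have hEE : ω * Real.exp (γ * s') < ω * Real.exp (γ * s) :=
      mul_lt_mul_of_pos_left (Real.exp_lt_exp.mpr (mul_lt_mul_of_pos_left hs's hγ)) hω0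
    have low : Real.exp (-s) - δ < T (ω * Real.exp (γ * s)) / S ω :=
      lt_of_lt_of_le hω1 (div_le_div_of_nonneg_right (hST _) hSω.le)
    have up : T (ω * Real.exp (γ * s)) / S ω < Real.exp (-s) + δ :=
      lt_of_le_of_lt (div_le_div_of_nonneg_right (hTS _ _ hEE) hSω.le) hω2
    rw [Real.dist_eq, abs_sub_lt_iff]
    constructor <;> linarith
  -- measurability of the indicator integrand
  have hms : ∀ ω : ℝ, MeasurableSet {x | ω < Y x} := fun ω =>
    measurableSet_lt measurable_const hYm
  have hmeas_ind : ∀ ω : ℝ, Measurable (fun x =>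
      Set.indicator {x | ω < Y x} (fun x => (1 - γ⁻¹ * Real.log (Y x / ω)) ^ 2) x) := by
    intro ω
    refine Measurable.indicator ?_ (hms ω)
    exact (measurable_const.sub ((Real.measurable_log.comp (hYm.div_const ω)).const_mul γ⁻¹)).pow_const 2
  have hnn : ∀ ω : ℝ, ∀ x, 0 ≤
      Set.indicator {x | ω < Y x} (fun x => (1 - γ⁻¹ * Real.log (Y x / ω)) ^ 2) x :=
    fun ω x => Set.indicator_nonneg (fun x _ => sq_nonneg _) x
  have hGanti : ∀ ω : ℝ, Antitone (fun t => μ {x | t <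
      Set.indicator {x | ω < Y x} (fun x => (1 - γ⁻¹ * Real.log (Y x / ω)) ^ 2) x}) :=
    fun ω a b hab => measure_mono (fun x hx => lt_of_le_of_lt hab hx)
  -- Step 1 : layer-cake representation
  have step1 : ∀ ω : ℝ,
      (∫ x, Set.indicator {x | ω < Y x} (fun x => (1 - γ⁻¹ * Real.log (Y x / ω)) ^ 2) x ∂μ)
        / S ω
      = ∫ t in Set.Ioi (0:ℝ), (μ {x | t <
          Set.indicator {x | ω < Y x} (fun x => (1 - γ⁻¹ * Real.log (Y x / ω)) ^ 2) x}).toReal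
          / S ω := by
    intro ω
    rw [integral_eq_lintegral_of_nonneg_ae (Filter.Eventually.of_forall (hnn ω))
        (hmeas_ind ω).aestronglyMeasurable,
      lintegral_eq_lintegral_meas_lt μ (Filter.Eventually.of_forall (hnn ω))
        (hmeas_ind ω).aemeasurable,
      ← MeasureTheory.integral_toReal ((hGanti ω).measurable.aemeasurable)
        (Filter.Eventually.of_forall fun t => measure_lt_top μ _),
      integral_div]
  -- the superlevel sets
  have hsetid : ∀ ω : ℝ, 0 < ω → ∀ t : ℝ, 0 < t →
      {x | t < Set.indicator {x | ω < Y x}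
          (fun x => (1 - γ⁻¹ * Real.log (Y x / ω)) ^ 2) x}
        = ({x | ω < Y x} \ ({x | ω < Y x} ∩
            {x | ω * Real.exp (γ * (1 - Real.sqrt t)) ≤ Y x}))
          ∪ {x | ω * Real.exp (γ * (1 + Real.sqrt t)) < Y x} := by
    intro ω hω t ht
    ext x
    simp only [Set.mem_setOf_eq, Set.mem_union, Set.mem_diff, Set.mem_inter_iff]
    constructor
    · intro hx
      have hxY : ω < Y x := by
        by_contra hcon
        rw [Set.indicator_of_notMem (by exact hcon : x ∉ {x | ω < Y x})] at hx
        exact absurd hx (not_lt.mpr (le_of_lt ht))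
      rw [Set.indicator_of_mem (by exact hxY : x ∈ {x | ω < Y x})] at hx
      rcases (hall_cond_iff hγ (le_of_lt ht) hω hxY).mp hx with hlt | hgt
      · exact Or.inl ⟨hxY, fun hcon => absurd hlt (not_lt.mpr hcon.2)⟩
      · exact Or.inr hgt
    · intro hx
      rcases hx with ⟨hxY, hcon⟩ | hgt
      · have hlt : Y x < ω * Real.exp (γ * (1 - Real.sqrt t)) := by
          by_contra hcon2
          exact hcon ⟨hxY, not_lt.mp hcon2⟩
        rw [Set.indicator_of_mem (by exact hxY : x ∈ {x | ω < Y x})]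
        exact (hall_cond_iff hγ (le_of_lt ht) hω hxY).mpr (Or.inl hlt)
      · have hxY : ω < Y x := by
          have h5 : ω ≤ ω * Real.exp (γ * (1 + Real.sqrt t)) :=
            le_mul_of_one_le_right hω.le
              (Real.one_le_exp (mul_nonneg hγ.le (by positivity)))
          linarith
        rw [Set.indicator_of_mem (by exact hxY : x ∈ {x | ω < Y x})]
        exact (hall_cond_iff hγ (le_of_lt ht) hω hxY).mpr (Or.inr hgt)
  -- measure decomposition
  have hmeasdec : ∀ ω : ℝ, 0 < ω → ∀ t : ℝ, 0 < t →
      (μ {x | t < Set.indicator {x | ω < Y x}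
          (fun x => (1 - γ⁻¹ * Real.log (Y x / ω)) ^ 2) x}).toReal
      = S ω - (μ ({x | ω < Y x} ∩
            {x | ω * Real.exp (γ * (1 - Real.sqrt t)) ≤ Y x})).toReal
          + S (ω * Real.exp (γ * (1 + Real.sqrt t))) := by
    intro ω hω t ht
    rw [hsetid ω hω t ht]
    have hab : ω * Real.exp (γ * (1 - Real.sqrt t)) ≤ ω * Real.exp (γ * (1 + Real.sqrt t)) := by
      have h5 : γ * (1 - Real.sqrt t) ≤ γ * (1 + Real.sqrt t) := by
        nlinarith [Real.sqrt_nonneg t]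
      exact mul_le_mul_of_nonneg_left (Real.exp_le_exp.mpr h5) hω.le
    have hdisj : Disjoint ({x | ω < Y x} \ ({x | ω < Y x} ∩
          {x | ω * Real.exp (γ * (1 - Real.sqrt t)) ≤ Y x}))
        {x | ω * Real.exp (γ * (1 + Real.sqrt t)) < Y x} := by
      refine Set.disjoint_left.mpr ?_
      rintro x ⟨hx1, hx2⟩ hxB
      exact hx2 ⟨hx1, le_trans hab (le_of_lt hxB)⟩
    have hBmeas : MeasurableSet {x | ω * Real.exp (γ * (1 + Real.sqrt t)) < Y x} :=
      measurableSet_lt measurable_const hYm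
    rw [measure_union hdisj hBmeas,
      ENNReal.toReal_add (measure_ne_top μ _) (measure_ne_top μ _)]
    congr 1
    rw [measure_diff Set.inter_subset_left
        ((hms ω).inter (measurableSet_le measurable_const hYm)).nullMeasurableSet
        (measure_ne_top μ _),
      ENNReal.toReal_sub_of_le (measure_mono Set.inter_subset_left) (measure_ne_top μ _)]
  -- pointwise limits
  have hptlim : ∀ t : ℝ, 0 < t → t ≠ 1 →
      Tendsto (fun ω => (μ {x | t < Set.indicator {x | ω < Y x}
          (fun x => (1 - γ⁻¹ * Real.log (Y x / ω)) ^ 2) x}).toReal / S ω) atTop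
        (nhds ((if t < 1 then 1 - Real.exp (-(1 - Real.sqrt t)) else 0)
          + Real.exp (-(1 + Real.sqrt t)))) := by
    intro t ht ht1
    have hIlim : Tendsto (fun ω => (μ ({x | ω < Y x} ∩
        {x | ω * Real.exp (γ * (1 - Real.sqrt t)) ≤ Y x})).toReal / S ω) atTop
        (nhds (if t < 1 then Real.exp (-(1 - Real.sqrt t)) else 1)) := by
      rcases lt_or_gt_of_ne ht1 with hlt | hgt
      · rw [if_pos hlt]
        refine Tendsto.congr' ?_ (hR' (1 - Real.sqrt t))
        filter_upwards [eventually_ge_atTop ω₁] with ω hω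
        have hω0 : 0 < ω := hωpos ω hω
        have hst : Real.sqrt t < 1 := by
          have h6 := (Real.sqrt_lt_sqrt_iff ht.le).mpr hlt
          rwa [Real.sqrt_one] at h6
        have hE1 : 1 < Real.exp (γ * (1 - Real.sqrt t)) :=
          Real.one_lt_exp_iff.mpr (mul_pos hγ (by linarith))
        have hset : {x | ω < Y x} ∩ {x | ω * Real.exp (γ * (1 - Real.sqrt t)) ≤ Y x}
            = {x | ω * Real.exp (γ * (1 - Real.sqrt t)) ≤ Y x} := by
          refine Set.inter_eq_right.mpr ?_
          intro x hx
          exact lt_of_lt_of_le (lt_mul_of_one_lt_right hω0 hE1) hx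
        simp only [hTdef]
        rw [hset]
      · rw [if_neg (not_lt.mpr (le_of_lt hgt))]
        refine Tendsto.congr' ?_ tendsto_const_nhds
        filter_upwards [eventually_ge_atTop ω₁] with ω hω
        have hω0 : 0 < ω := hωpos ω hω
        have hst : 1 < Real.sqrt t := by
          have h6 := (Real.sqrt_lt_sqrt_iff (by norm_num : (0:ℝ) ≤ 1)).mpr hgt
          rwa [Real.sqrt_one] at h6
        have hE1 : Real.exp (γ * (1 - Real.sqrt t)) ≤ 1 :=
          Real.exp_le_one_iff.mpr (by nlinarith)
        have hset : {x | ω < Y x} ∩ {x | ω * Real.exp (γ * (1 - Real.sqrt t)) ≤ Y x}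
            = {x | ω < Y x} := by
          refine Set.inter_eq_left.mpr ?_
          intro x hx
          have h8 : ω * Real.exp (γ * (1 - Real.sqrt t)) ≤ ω :=
            mul_le_of_le_one_right hω0.le hE1
          exact le_trans h8 (le_of_lt hx)
        show (1:ℝ) = _
        rw [hset]
        exact (div_self (ne_of_gt (hSposAll ω hω))).symm
    have hBlim := hR (1 + Real.sqrt t)
    have hmain := ((tendsto_const_nhds :
      Tendsto (fun _ : ℝ => (1:ℝ)) atTop (nhds 1)).sub hIlim).add hBlim
    have hval : (if t < 1 then 1 - Real.exp (-(1 - Real.sqrt t)) else 0)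
        + Real.exp (-(1 + Real.sqrt t))
        = 1 - (if t < 1 then Real.exp (-(1 - Real.sqrt t)) else 1)
          + Real.exp (-(1 + Real.sqrt t)) := by
      split_ifs <;> ring
    rw [hval]
    refine Tendsto.congr' ?_ hmain
    filter_upwards [eventually_ge_atTop ω₁] with ω hω
    have hSω : 0 < S ω := hSposAll ω hω
    rw [hmeasdec ω (hωpos ω hω) t ht]
    field_simp
  -- a.e. facts on (0, ∞)
  have hae1 : ∀ᵐ t ∂(volume.restrict (Set.Ioi (0:ℝ))), 0 < t :=
    ae_restrict_mem measurableSet_Ioi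
  have hae2 : ∀ᵐ t ∂(volume.restrict (Set.Ioi (0:ℝ))), t ≠ (1:ℝ) := by
    refine ae_restrict_of_ae ?_
    refine ae_iff.mpr ?_
    have h6 : {t : ℝ | ¬ t ≠ 1} = {1} := by ext t; simp
    rw [h6]
    exact Real.volume_singleton
  -- uniform bound
  have hbound : ∀ᶠ ω in atTop, ∀ᵐ t ∂(volume.restrict (Set.Ioi (0:ℝ))),
      ‖(μ {x | t < Set.indicator {x | ω < Y x}
          (fun x => (1 - γ⁻¹ * Real.log (Y x / ω)) ^ 2) x}).toReal / S ω‖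
        ≤ (if t ≤ 1 then (1:ℝ) else 4 * Real.exp (-(1 + Real.sqrt t))) := by
    filter_upwards [eventually_ge_atTop ω₁] with ω hω
    filter_upwards [hae1] with t ht
    have hω0 : 0 < ω := hωpos ω hω
    have hSω : 0 < S ω := hSposAll ω hω
    rw [Real.norm_eq_abs, abs_of_nonneg (div_nonneg ENNReal.toReal_nonneg hSω.le)]
    by_cases h1 : t ≤ 1
    · rw [if_pos h1]
      have hsub : {x | t < Set.indicator {x | ω < Y x}
          (fun x => (1 - γ⁻¹ * Real.log (Y x / ω)) ^ 2) x} ⊆ {x | ω < Y x} := by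
        intro x hx
        simp only [Set.mem_setOf_eq] at hx
        by_contra hcon
        rw [Set.indicator_of_notMem hcon] at hx
        exact absurd hx (not_lt.mpr ht.le)
      exact div_le_one_of_le₀
        (ENNReal.toReal_mono (measure_ne_top μ _) (measure_mono hsub)) hSω.le
    · rw [if_neg h1]
      push_neg at h1
      rw [hmeasdec ω hω0 t ht]
      have hst : 1 < Real.sqrt t := by
        have h6 := (Real.sqrt_lt_sqrt_iff (by norm_num : (0:ℝ) ≤ 1)).mpr h1
        rwa [Real.sqrt_one] at h6
      have hE1 : Real.exp (γ * (1 - Real.sqrt t)) ≤ 1 :=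
        Real.exp_le_one_iff.mpr (by nlinarith)
      have hset : {x | ω < Y x} ∩ {x | ω * Real.exp (γ * (1 - Real.sqrt t)) ≤ Y x}
          = {x | ω < Y x} := by
        refine Set.inter_eq_left.mpr ?_
        intro x hx
        have h8 : ω * Real.exp (γ * (1 - Real.sqrt t)) ≤ ω :=
          mul_le_of_le_one_right hω0.le hE1
        exact le_trans h8 (le_of_lt hx)
      rw [hset]
      have hsS : (μ {x | ω < Y x}).toReal = S ω := rfl
      rw [hsS, sub_self, zero_add]
      have hbω : ω ≤ ω * Real.exp (γ * (1 + Real.sqrt t)) :=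
        le_mul_of_one_le_right hω0.le
          (Real.one_le_exp (mul_nonneg hγ.le (by positivity)))
      rw [key (1 + Real.sqrt t) ω hω0 (le_trans hω₁y₀ hω)
        (le_trans (le_trans hω₁y₀ hω) hbω)]
      have hb1 := hhb _ (le_trans hω hbω)
      have hb2 := hhb ω hω
      have hdiv : h (ω * Real.exp (γ * (1 + Real.sqrt t))) / h ω ≤ 4 := by
        have h9 : h (ω * Real.exp (γ * (1 + Real.sqrt t))) / h ω ≤ (2 * c₀) / (c₀ / 2) :=
          div_le_div₀ (by linarith) hb1.2 (by linarith) hb2.1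
        have h10 : (2 * c₀) / (c₀ / 2) = 4 := by
          field_simp
          ring
        linarith
      have h11 := mul_le_mul_of_nonneg_left hdiv (Real.exp_pos (-(1 + Real.sqrt t))).le
      linarith [h11]
  -- measurability for DCT
  have hFmeas : ∀ ω : ℝ, AEStronglyMeasurable (fun t =>
      (μ {x | t < Set.indicator {x | ω < Y x}
        (fun x => (1 - γ⁻¹ * Real.log (Y x / ω)) ^ 2) x}).toReal / S ω)
      (volume.restrict (Set.Ioi (0:ℝ))) := fun ω =>
    (((hGanti ω).measurable.ennreal_toReal).div_const _).aestronglyMeasurable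
  -- a.e. pointwise convergence
  have hlimae : ∀ᵐ t ∂(volume.restrict (Set.Ioi (0:ℝ))),
      Tendsto (fun ω => (μ {x | t < Set.indicator {x | ω < Y x}
        (fun x => (1 - γ⁻¹ * Real.log (Y x / ω)) ^ 2) x}).toReal / S ω) atTop
        (nhds ((if t < 1 then 1 - Real.exp (-(1 - Real.sqrt t)) else 0)
          + Real.exp (-(1 + Real.sqrt t)))) := by
    filter_upwards [hae1, hae2] with t ht ht1 using hptlim t ht ht1
  -- dominated convergence
  have hDCT := MeasureTheory.tendsto_integral_filter_of_dominated_convergence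
    (bound := fun t : ℝ => if t ≤ 1 then (1:ℝ) else 4 * Real.exp (-(1 + Real.sqrt t)))
    (Filter.Eventually.of_forall hFmeas) hbound hall_bound_integrable hlimae
  rw [hall_g_val] at hDCT
  exact hDCT.congr (fun ω => (step1 ω).symm)
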